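/- Let n ≥ 1, β ∈ (0,1), τ ∈ (0,1), and let S ⊆ {1,…,n} with |S| ≥ nβ. Let (V_i)_{i∈S} be independent random variables taking values in {0,1} with P[V_i = 1] ≤ exp(−(1 + 1/β)/τ) for each i ∈ S. Then P[Σ_{i∈S} V_i ≥ τ·|S|] ≤ e^{−n}. -/

import Mathlib

open MeasureTheory ProbabilityTheory Finset
open scoped ENNReal

/-- Per-subset Bernoulli tail bound from the proof of the uniform
norm-concentration lemma: a sum of independent `{0,1}`-valued random variables
over a subset `S` with `|S| ≥ nβ`, each equal to `1` with probability at most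
`exp(−(1 + 1/β)/τ)`, exceeds `τ|S|` with probability at most `e^{−n}`. -/
theorem subset_bernoulli_tail_bound
    (n : ℕ) (hn : 1 ≤ n) (β τ : ℝ)
    (hβ : β ∈ Set.Ioo (0 : ℝ) 1) (hτ : τ ∈ Set.Ioo (0 : ℝ) 1)
    (S : Finset (Fin n)) (hS : (n : ℝ) * β ≤ S.card)
    (Ω : Type*) [MeasureSpace Ω] [IsProbabilityMeasure (ℙ : Measure Ω)]
    (V : Fin n → Ω → ℕ)
    (hmeas : ∀ i ∈ S, Measurable (V i))
    (h01 : ∀ i ∈ S, ∀ ω, V i ω = 0 ∨ V i ω = 1)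
    (hindep : iIndepFun
      (fun i : {i : Fin n // i ∈ S} => V i.1) ℙ)
    (hq : ∀ i ∈ S, (ℙ {ω | V i ω = 1}).toReal ≤ Real.exp (-(1 + 1 / β) / τ)) :
    (ℙ {ω | τ * (S.card : ℝ) ≤ ((∑ i ∈ S, V i ω : ℕ) : ℝ)}).toReal
      ≤ Real.exp (-(n : ℝ)) := by
  obtain ⟨hβ0, hβ1⟩ := hβ
  obtain ⟨hτ0, hτ1⟩ := hτ
  set s := S.card with hs
  set k := ⌈τ * (s : ℝ)⌉₊ with hk
  set q := Real.exp (-(1 + 1 / β) / τ) with hqdef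
  have hq0 : 0 < q := Real.exp_pos _
  have hn0 : (0 : ℝ) < n := by exact_mod_cast hn
  have hs0 : (0 : ℝ) < s := lt_of_lt_of_le (by positivity) hS
  -- inclusion into union over subsets of size k
  have hsub : {ω | τ * (s : ℝ) ≤ ((∑ i ∈ S, V i ω : ℕ) : ℝ)} ⊆
      ⋃ T ∈ S.powersetCard k, ⋂ i ∈ T, {ω | V i ω = 1} := by
    intro ω hω
    simp only [Set.mem_setOf_eq] at hω
    have hsum : (∑ i ∈ S, V i ω) = (S.filter (fun i => V i ω = 1)).card := by
      rw [Finset.card_filter]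
      refine Finset.sum_congr rfl fun i hi => ?_
      rcases h01 i hi ω with h | h <;> simp [h]
    have hkle : k ≤ (S.filter (fun i => V i ω = 1)).card := by
      rw [hk]
      apply Nat.ceil_le.mpr
      rw [← hsum]
      exact_mod_cast hω
    obtain ⟨T, hTsub, hTcard⟩ := Finset.exists_subset_card_eq hkle
    refine Set.mem_biUnion (Finset.mem_powersetCard.mpr
      ⟨hTsub.trans (Finset.filter_subset _ _), hTcard⟩) ?_
    exact Set.mem_biInter fun i hi => (Finset.mem_filter.mp (hTsub hi)).2
  -- probability of each intersection
  have hprod : ∀ T ∈ S.powersetCard k,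
      ℙ (⋂ i ∈ T, {ω | V i ω = 1}) ≤ ENNReal.ofReal (q ^ k) := by
    intro T hT
    obtain ⟨hTS, hTcard⟩ := Finset.mem_powersetCard.mp hT
    set T' : Finset {i : Fin n // i ∈ S} := T.subtype (· ∈ S) with hT'
    have hInter : (⋂ i ∈ T, {ω | V i ω = 1})
        = ⋂ j ∈ T', {ω | V j.1 ω = 1} := by
      ext ω
      simp only [Set.mem_iInter, hT', Finset.mem_subtype]
      constructor
      · intro h j hj; exact h j.1 hj
      · intro h i hi; exact h ⟨i, hTS hi⟩ hi
    have hT'card : T'.card = k := by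
      rw [hT', Finset.card_subtype, Finset.filter_true_of_mem (fun i hi => hTS hi), hTcard]
    rw [hInter]
    rw [hindep.meas_biInter (S := T') (s := fun j => {ω | V j.1 ω = 1})
      (fun j _ => ⟨{1}, measurableSet_singleton 1, rfl⟩)]
    calc ∏ j ∈ T', ℙ {ω | V j.1 ω = 1}
        ≤ ∏ _j ∈ T', ENNReal.ofReal q := by
          refine Finset.prod_le_prod' fun j _ => ?_
          rw [ENNReal.le_ofReal_iff_toReal_le (measure_ne_top _ _) hq0.le]
          exact hq j.1 j.2
      _ = ENNReal.ofReal q ^ k := by rw [Finset.prod_const, hT'card]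
      _ = ENNReal.ofReal (q ^ k) := by rw [ENNReal.ofReal_pow hq0.le]
  -- union bound
  have hmain : ℙ {ω | τ * (s : ℝ) ≤ ((∑ i ∈ S, V i ω : ℕ) : ℝ)}
      ≤ ENNReal.ofReal ((s.choose k : ℝ) * q ^ k) := by
    calc ℙ {ω | τ * (s : ℝ) ≤ ((∑ i ∈ S, V i ω : ℕ) : ℝ)}
        ≤ ℙ (⋃ T ∈ S.powersetCard k, ⋂ i ∈ T, {ω | V i ω = 1}) := measure_mono hsub
      _ ≤ ∑ T ∈ S.powersetCard k, ℙ (⋂ i ∈ T, {ω | V i ω = 1}) :=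
          measure_biUnion_finset_le _ _
      _ ≤ ∑ _T ∈ S.powersetCard k, ENNReal.ofReal (q ^ k) := Finset.sum_le_sum hprod
      _ = (s.choose k : ℝ≥0∞) * ENNReal.ofReal (q ^ k) := by
          rw [Finset.sum_const, Finset.card_powersetCard, nsmul_eq_mul]
      _ = ENNReal.ofReal ((s.choose k : ℝ) * q ^ k) := by
          rw [ENNReal.ofReal_mul (by positivity), ENNReal.ofReal_natCast]
  have htoReal : (ℙ {ω | τ * (s : ℝ) ≤ ((∑ i ∈ S, V i ω : ℕ) : ℝ)}).toReal
      ≤ (s.choose k : ℝ) * q ^ k :=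
    ENNReal.toReal_le_of_le_ofReal (by positivity) hmain
  refine htoReal.trans ?_
  -- arithmetic
  have hks : k ≤ s := by
    rw [hk]
    exact Nat.ceil_le.mpr (by nlinarith)
  have hchoose : (s.choose k : ℝ) ≤ (2 : ℝ) ^ s := by
    have h1 : s.choose k ≤ 2 ^ s := by
      rw [← Nat.sum_range_choose s]
      exact Finset.single_le_sum (f := fun m => s.choose m)
        (fun _ _ => Nat.zero_le _) (Finset.mem_range.mpr (Nat.lt_succ_of_le hks))
    exact_mod_cast h1
  have h2exp : (2 : ℝ) ^ s ≤ Real.exp s := by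
    calc (2 : ℝ) ^ s ≤ Real.exp 1 ^ s := by
          gcongr
          linarith [Real.add_one_le_exp (1 : ℝ)]
      _ = Real.exp s := by rw [← Real.exp_nat_mul, mul_one]
  have hqk : q ^ k ≤ Real.exp (-(1 + 1 / β) * s) := by
    rw [hqdef, ← Real.exp_nat_mul]
    apply Real.exp_le_exp.mpr
    have hck : τ * s ≤ (k : ℝ) := Nat.le_ceil _
    have hc : -(1 + 1 / β) / τ < 0 := by
      apply div_neg_of_neg_of_pos _ hτ0
      have h1β : 0 < 1 / β := by positivity
      linarith
    calc (k : ℝ) * (-(1 + 1 / β) / τ) ≤ (τ * s) * (-(1 + 1 / β) / τ) :=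
        mul_le_mul_of_nonpos_right hck hc.le
      _ = -(1 + 1 / β) * s := by field_simp
  calc (s.choose k : ℝ) * q ^ k ≤ Real.exp s * Real.exp (-(1 + 1 / β) * s) :=
        mul_le_mul (hchoose.trans h2exp) hqk (by positivity) (Real.exp_nonneg _)
    _ = Real.exp (s + -(1 + 1 / β) * s) := (Real.exp_add _ _).symm
    _ ≤ Real.exp (-(n : ℝ)) := by
        apply Real.exp_le_exp.mpr
        have heq : (s : ℝ) + -(1 + 1 / β) * s = -((s : ℝ) / β) := by
          field_simp; ring
        rw [heq, neg_le_neg_iff]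
        exact (le_div_iff₀ hβ0).mpr (by linarith [hS])
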